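/- Let A: V → V be a linear map with A² = 0 on a finite-dimensional real vector space V, and let g: V → V be a smooth diffeomorphism satisfying the flow-equivariance condition g(eᵗ(z − tAz)) = eᵗ(g(z) − tA(g(z))) for all t ∈ ℝ and z ∈ V. Then g(0) = 0, g equals its derivative at the origin (so g is linear), and g commutes with A. -/

import Mathlib

open Filter Topology ContinuousLinearMap

private lemma aux_exp_poly_tendsto (M : ℝ) (hM : 0 ≤ M) (k : ℕ) :
    Tendsto (fun t : ℝ => Real.exp t * (1 + |t| * M) ^ k) atBot (𝓝 0) := by
  have h : Tendsto (fun s : ℝ => Real.exp (-s) * (1 + |s| * M) ^ k) atTop (𝓝 0) := by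
    have hg : Tendsto (fun s : ℝ => (1 + M) ^ k * (s ^ k * Real.exp (-s))) atTop (𝓝 0) := by
      simpa using (Real.tendsto_pow_mul_exp_neg_atTop_nhds_zero k).const_mul ((1 + M) ^ k)
    apply squeeze_zero' ?_ ?_ hg
    · filter_upwards [eventually_ge_atTop (0 : ℝ)] with s hs
      positivity
    · filter_upwards [eventually_ge_atTop (1 : ℝ)] with s hs
      have h0 : (0 : ℝ) ≤ s := le_trans zero_le_one hs
      rw [abs_of_nonneg h0]
      have h1 : 1 + s * M ≤ s * (1 + M) := by nlinarith
      have h2 : (1 + s * M) ^ k ≤ (s * (1 + M)) ^ k :=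
        pow_le_pow_left₀ (by positivity) h1 k
      calc Real.exp (-s) * (1 + s * M) ^ k
          ≤ Real.exp (-s) * (s * (1 + M)) ^ k := by
            exact mul_le_mul_of_nonneg_left h2 (Real.exp_pos _).le
        _ = (1 + M) ^ k * (s ^ k * Real.exp (-s)) := by rw [mul_pow]; ring
  have := h.comp tendsto_neg_atBot_atTop
  simpa [Function.comp_def, neg_neg, abs_neg] using this

set_option maxHeartbeats 1000000 in
/-- Let `A : V → V` be linear with `A² = 0` and let the smooth diffeomorphism
`g : V → V` satisfy the flow-equivariance `g(eᵗ(z − tAz)) = eᵗ(g(z) − tA(g(z)))` for all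
`t ∈ ℝ`, `z ∈ V`. Then `g(0) = 0`, `g` equals its derivative at the origin (so `g` is
linear), and `g` commutes with `A`. -/
theorem stmt_18 {V : Type*} [NormedAddCommGroup V] [NormedSpace ℝ V] [FiniteDimensional ℝ V]
    (A : V →ₗ[ℝ] V) (hA2 : A ∘ₗ A = 0)
    (g ginv : V → V) (hg : ContDiff ℝ (⊤ : ℕ∞) g) (hginv : ContDiff ℝ (⊤ : ℕ∞) ginv)
    (hli : Function.LeftInverse ginv g) (hri : Function.RightInverse ginv g)
    (hflow : ∀ (t : ℝ) (z : V),
      g (Real.exp t • (z - t • A z)) = Real.exp t • (g z - t • A (g z))) :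
    g 0 = 0 ∧ (∀ z : V, g z = fderiv ℝ g 0 z) ∧ ∀ z : V, g (A z) = A (g z) := by
  classical
  -- `A` as a continuous linear map
  set A' : V →L[ℝ] V := LinearMap.toContinuousLinearMap A with hA'def
  have hA'app : ∀ v, A' v = A v := fun v => rfl
  have hAA : ∀ v, A' (A' v) = 0 := by
    intro v
    have := LinearMap.ext_iff.mp hA2 v
    simpa [hA'app] using this
  set M : ℝ := ‖A'‖ with hMdef
  have hM : (0 : ℝ) ≤ M := norm_nonneg _
  -- the flow and its inverse
  set φ : ℝ → V →L[ℝ] V :=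
    fun t => Real.exp t • (ContinuousLinearMap.id ℝ V - t • A') with hφdef
  set ψ : ℝ → V →L[ℝ] V :=
    fun t => (Real.exp t)⁻¹ • (ContinuousLinearMap.id ℝ V + t • A') with hψdef
  have hψφ : ∀ t, (ψ t).comp (φ t) = ContinuousLinearMap.id ℝ V := by
    intro t
    ext v
    have h1 : (φ t) v = Real.exp t • (v - t • A' v) := by
      simp [hφdef]
    have h2 : ∀ w, (ψ t) w = (Real.exp t)⁻¹ • (w + t • A' w) := by
      intro w; simp [hψdef]
    have hAw : A' (Real.exp t • (v - t • A' v)) = Real.exp t • A' v := by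
      rw [map_smul, map_sub, map_smul, hAA, smul_zero, sub_zero]
    rw [ContinuousLinearMap.comp_apply, h1, h2, hAw, ContinuousLinearMap.coe_id', id_eq]
    match_scalars <;> (field_simp; try ring)
  have hflow' : ∀ t z, g (φ t z) = φ t (g z) := by
    intro t z
    have := hflow t z
    simpa [hφdef, hA'app, ContinuousLinearMap.smul_apply, ContinuousLinearMap.sub_apply]
      using this
  have hgdiff : Differentiable ℝ g := hg.differentiable (by simp)
  set F : V → V →L[ℝ] V := fderiv ℝ g with hFdef
  have hFcd : ContDiff ℝ (⊤ : ℕ∞) F := hg.fderiv_right (by exact_mod_cast le_top)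
  have hFdiff : Differentiable ℝ F := hFcd.differentiable (by simp)
  set DF : V → V →L[ℝ] V →L[ℝ] V := fderiv ℝ F with hDFdef
  have hDFcd : ContDiff ℝ (⊤ : ℕ∞) DF := hFcd.fderiv_right (by exact_mod_cast le_top)
  have hDFcont : Continuous DF := hDFcd.continuous
  -- First derivative of the equivariance
  have E1 : ∀ t z, (F (φ t z)).comp (φ t) = (φ t).comp (F z) := by
    intro t z
    have h1 : HasFDerivAt (fun w => g (φ t w)) ((F (φ t z)).comp (φ t)) z :=
      ((hgdiff (φ t z)).hasFDerivAt).comp z ((φ t).hasFDerivAt)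
    have h2 : HasFDerivAt (fun w => φ t (g w)) ((φ t).comp (F z)) z :=
      ((φ t).hasFDerivAt).comp z ((hgdiff z).hasFDerivAt)
    have heq : (fun w => g (φ t w)) = fun w => φ t (g w) := funext fun w => hflow' t w
    rw [heq] at h1
    exact h1.unique h2
  -- Second derivative of the equivariance
  have E2 : ∀ t z u, ((DF (φ t z)) (φ t u)).comp (φ t) = (φ t).comp ((DF z) u) := by
    intro t z u
    set cR : (V →L[ℝ] V) →L[ℝ] (V →L[ℝ] V) :=
      (ContinuousLinearMap.compL ℝ V V V).flip (φ t) with hcRdef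
    set cL : (V →L[ℝ] V) →L[ℝ] (V →L[ℝ] V) :=
      ContinuousLinearMap.compL ℝ V V V (φ t) with hcLdef
    have hcR : ∀ X : V →L[ℝ] V, cR X = X.comp (φ t) := fun X => rfl
    have hcL : ∀ X : V →L[ℝ] V, cL X = (φ t).comp X := fun X => rfl
    have h1 : HasFDerivAt (fun w => cR (F (φ t w)))
        (cR.comp ((DF (φ t z)).comp (φ t))) z :=
      (cR.hasFDerivAt).comp z (((hFdiff (φ t z)).hasFDerivAt).comp z ((φ t).hasFDerivAt))
    have h2 : HasFDerivAt (fun w => cL (F w)) (cL.comp (DF z)) z :=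
      (cL.hasFDerivAt).comp z ((hFdiff z).hasFDerivAt)
    have heq : (fun w => cR (F (φ t w))) = fun w => cL (F w) := by
      funext w
      rw [hcR, hcL]
      exact E1 t w
    rw [heq] at h1
    have h3 := h1.unique h2
    have h4 := ContinuousLinearMap.ext_iff.mp h3 u
    simpa [hcR, hcL] using h4
  -- norm bounds on the flow
  have hφn : ∀ t, ‖φ t‖ ≤ Real.exp t * (1 + |t| * M) := by
    intro t
    have h1 : ‖ContinuousLinearMap.id ℝ V - t • A'‖ ≤ 1 + |t| * M := by
      calc ‖ContinuousLinearMap.id ℝ V - t • A'‖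
          ≤ ‖ContinuousLinearMap.id ℝ V‖ + ‖t • A'‖ := norm_sub_le _ _
        _ ≤ 1 + |t| * M := by
            have h2 : ‖ContinuousLinearMap.id ℝ V‖ ≤ 1 := ContinuousLinearMap.norm_id_le
            have h3 : ‖t • A'‖ = |t| * M := by rw [norm_smul t A', Real.norm_eq_abs]
            linarith
    calc ‖φ t‖ = Real.exp t * ‖ContinuousLinearMap.id ℝ V - t • A'‖ := by
          have hrfl : φ t = Real.exp t • (ContinuousLinearMap.id ℝ V - t • A') := rfl
          rw [hrfl, norm_smul (Real.exp t) (ContinuousLinearMap.id ℝ V - t • A'), Real.norm_eq_abs, abs_of_pos (Real.exp_pos t)]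
      _ ≤ Real.exp t * (1 + |t| * M) :=
          mul_le_mul_of_nonneg_left h1 (Real.exp_pos t).le
  have hψn : ∀ t, ‖ψ t‖ ≤ (Real.exp t)⁻¹ * (1 + |t| * M) := by
    intro t
    have h1 : ‖ContinuousLinearMap.id ℝ V + t • A'‖ ≤ 1 + |t| * M := by
      calc ‖ContinuousLinearMap.id ℝ V + t • A'‖
          ≤ ‖ContinuousLinearMap.id ℝ V‖ + ‖t • A'‖ := norm_add_le _ _
        _ ≤ 1 + |t| * M := by
            have h2 : ‖ContinuousLinearMap.id ℝ V‖ ≤ 1 := ContinuousLinearMap.norm_id_le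
            have h3 : ‖t • A'‖ = |t| * M := by rw [norm_smul t A', Real.norm_eq_abs]
            linarith
    calc ‖ψ t‖ = (Real.exp t)⁻¹ * ‖ContinuousLinearMap.id ℝ V + t • A'‖ := by
          have hrfl : ψ t = (Real.exp t)⁻¹ • (ContinuousLinearMap.id ℝ V + t • A') := rfl
          rw [hrfl, norm_smul (Real.exp t)⁻¹ (ContinuousLinearMap.id ℝ V + t • A'), Real.norm_eq_abs, abs_of_pos (inv_pos.mpr (Real.exp_pos t))]
      _ ≤ (Real.exp t)⁻¹ * (1 + |t| * M) :=
          mul_le_mul_of_nonneg_left h1 (inv_pos.mpr (Real.exp_pos t)).le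
  -- vanishing of the second derivative
  have key : ∀ z u, DF z u = 0 := by
    intro z u
    have rep : ∀ t, DF z u = (ψ t).comp (((DF (φ t z)) (φ t u)).comp (φ t)) := by
      intro t
      calc DF z u = (ContinuousLinearMap.id ℝ V).comp (DF z u) := by
            rw [ContinuousLinearMap.id_comp]
        _ = ((ψ t).comp (φ t)).comp (DF z u) := by rw [hψφ]
        _ = (ψ t).comp ((φ t).comp (DF z u)) := by rw [ContinuousLinearMap.comp_assoc]
        _ = (ψ t).comp (((DF (φ t z)) (φ t u)).comp (φ t)) := by rw [← E2 t z u]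
    have hb : ∀ t, ‖DF z u‖ ≤ ‖ψ t‖ * (‖DF (φ t z)‖ * (‖φ t‖ * ‖u‖) * ‖φ t‖) := by
      intro t
      rw [rep t]
      calc ‖(ψ t).comp (((DF (φ t z)) (φ t u)).comp (φ t))‖
          ≤ ‖ψ t‖ * ‖((DF (φ t z)) (φ t u)).comp (φ t)‖ := opNorm_comp_le _ _
        _ ≤ ‖ψ t‖ * (‖(DF (φ t z)) (φ t u)‖ * ‖φ t‖) := by
            gcongr
            exact opNorm_comp_le _ _
        _ ≤ ‖ψ t‖ * (‖DF (φ t z)‖ * (‖φ t‖ * ‖u‖) * ‖φ t‖) := by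
            gcongr
            calc ‖(DF (φ t z)) (φ t u)‖ ≤ ‖DF (φ t z)‖ * ‖φ t u‖ := le_opNorm _ _
              _ ≤ ‖DF (φ t z)‖ * (‖φ t‖ * ‖u‖) := by
                  gcongr
                  exact le_opNorm _ _
    have hφz : Tendsto (fun t => φ t z) atBot (𝓝 0) := by
      apply squeeze_zero_norm (a := fun t => Real.exp t * (1 + |t| * M) * ‖z‖)
      · intro t
        calc ‖φ t z‖ ≤ ‖φ t‖ * ‖z‖ := le_opNorm _ _
          _ ≤ Real.exp t * (1 + |t| * M) * ‖z‖ :=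
              mul_le_mul_of_nonneg_right (hφn t) (norm_nonneg _)
      · have h := (aux_exp_poly_tendsto M hM 1).mul_const ‖z‖
        rw [zero_mul] at h
        refine h.congr fun t => ?_
        rw [pow_one]
    have hDFb : ∀ᶠ t in atBot, ‖DF (φ t z)‖ ≤ ‖DF (0 : V)‖ + 1 := by
      have h := (hDFcont.tendsto (0 : V)).comp hφz
      have h2 := (tendsto_norm (E := V →L[ℝ] V →L[ℝ] V)).comp h
      exact h2.eventually (eventually_le_nhds (lt_add_one _))
    have hfin : ∀ᶠ t in atBot,
        ‖DF z u‖ ≤ Real.exp t * (1 + |t| * M) ^ 3 * ((‖DF (0 : V)‖ + 1) * ‖u‖) := by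
      filter_upwards [hDFb] with t ht
      refine (hb t).trans ?_
      have h1 := hφn t
      have h2 := hψn t
      calc ‖ψ t‖ * (‖DF (φ t z)‖ * (‖φ t‖ * ‖u‖) * ‖φ t‖)
          ≤ ((Real.exp t)⁻¹ * (1 + |t| * M)) *
            ((‖DF (0 : V)‖ + 1) * ((Real.exp t * (1 + |t| * M)) * ‖u‖) *
              (Real.exp t * (1 + |t| * M))) := by
            gcongr <;> positivity
        _ = Real.exp t * (1 + |t| * M) ^ 3 * ((‖DF (0 : V)‖ + 1) * ‖u‖) := by
            field_simp
    have hlim : Tendsto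
        (fun t => Real.exp t * (1 + |t| * M) ^ 3 * ((‖DF (0 : V)‖ + 1) * ‖u‖)) atBot (𝓝 0) := by
      have h := (aux_exp_poly_tendsto M hM 3).mul_const ((‖DF (0 : V)‖ + 1) * ‖u‖)
      rwa [zero_mul] at h
    have hle : ‖DF z u‖ ≤ 0 := ge_of_tendsto hlim hfin
    have : ‖DF z u‖ = 0 := le_antisymm hle (norm_nonneg _)
    exact norm_eq_zero.mp this
  have hDFzero : ∀ z, DF z = 0 := by
    intro z
    ext u v
    simp [key z u]
  have hFconst : ∀ z, F z = F 0 := by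
    intro z
    exact is_const_of_fderiv_eq_zero hFdiff (fun x => hDFzero x) z 0
  -- g 0 = 0
  have he1 : (1 : ℝ) < Real.exp 1 := by
    have := Real.add_one_le_exp (1 : ℝ)
    linarith
  have hg0 : g 0 = 0 := by
    have h1 := hflow 1 0
    have h2 := hflow 2 0
    simp only [map_zero, smul_zero, sub_zero, zero_sub, smul_neg] at h1 h2
    -- h1 : g 0 = Real.exp 1 • (g 0 - 1 • A (g 0))
    -- h2 : g 0 = Real.exp 2 • (g 0 - 2 • A (g 0))
    have he2 : Real.exp 2 = Real.exp 1 * Real.exp 1 := by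
      rw [← Real.exp_add]; norm_num
    rw [he2] at h2
    have key0 : ((Real.exp 1 - 1) ^ 2) • g 0 = 0 := by
      linear_combination (norm := module) (-(2 * Real.exp 1)) • h1 + h2
    have hne : ((Real.exp 1 - 1) ^ 2) ≠ 0 := by
      have : Real.exp 1 - 1 ≠ 0 := by linarith
      positivity
    exact (smul_eq_zero.mp key0).resolve_left hne
  -- g is linear
  have hgz : ∀ z, g z = F 0 z := by
    have hkdiff : Differentiable ℝ (fun w => g w - F 0 w) :=
      hgdiff.sub (F 0).differentiable
    have hk : ∀ z, g z - F 0 z = g 0 - F 0 0 := by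
      intro z
      apply is_const_of_fderiv_eq_zero hkdiff
      intro x
      rw [fderiv_fun_sub (hgdiff x) (F 0).differentiableAt]
      rw [(F 0).fderiv]
      have : fderiv ℝ g x = F 0 := hFconst x
      rw [this, sub_self]
    intro z
    have := hk z
    rw [hg0, map_zero, sub_zero] at this
    exact sub_eq_zero.mp (by rw [this])
  refine ⟨hg0, hgz, ?_⟩
  -- g commutes with A
  intro z
  have h := hflow 1 z
  rw [hgz (Real.exp 1 • (z - 1 • A z)), hgz z] at h
  rw [map_smul, map_sub, map_smul] at h
  have hsmul := smul_right_injective V (Real.exp_ne_zero 1) h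
  rw [one_smul, one_smul] at hsmul
  have hcomm : F 0 (A z) = A (F 0 z) := sub_right_inj.mp hsmul
  rw [hgz (A z), hgz z]
  exact hcomm
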